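/- Let n > m ≥ 0 and define H(j,k) = (−1)^{b(j,k)} for j, k ∈ {0, …, 2ⁿ − 1}, where b(j,k) is the number of bit positions at which the binary expansions of j and k both have a 1. For 0 ≤ i ≤ 2^{n−m} − 1, let W_i be the span in ℝ^{2ⁿ−2^m} of the vectors (H(j, i·2^m + r))_{2^m ≤ j ≤ 2ⁿ−1} for 0 ≤ r ≤ 2^m − 1, with orthogonal projections P_i. Then {W_i}_{i=0}^{2^{n−m}−1} is an equi-distance tight fusion frame for ℝ^{2ⁿ−2^m} consisting of 2^{n−m} subspaces of dimension 2^m: ∑_i P_i = (2ⁿ/(2ⁿ − 2^m)) · Id, each dim W_i = 2^m, and all pairwise chordal distances dist(W_{i₁}, W_{i₂}) (i₁ ≠ i₂) are equal. -/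

import Mathlib

open scoped InnerProductSpace

/-- `bitOverlap j k` is the number of bit positions at which the binary
expansions of `j` and `k` both have a `1`. -/
def bitOverlap (j k : ℕ) : ℕ := (Nat.land j k).bits.count true

section aux

/-- The sign `(-1)^(number of 1-bits of x)`. -/
noncomputable def eps (x : ℕ) : ℝ := (-1 : ℝ) ^ (x.bits.count true)

lemma eps_zero : eps 0 = 1 := by simp [eps]

lemma eps_two_mul (x : ℕ) : eps (2 * x) = eps x := by
  rcases Nat.eq_zero_or_pos x with h | h
  · simp [h]
  · simp [eps, Nat.bit0_bits x h.ne']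

lemma eps_two_mul_add_one (x : ℕ) : eps (2 * x + 1) = - eps x := by
  simp [eps, Nat.bit1_bits x, pow_succ]

lemma land_two_mul (j k : ℕ) : (2 * j) &&& k = 2 * (j &&& (k / 2)) := by
  apply Nat.eq_of_testBit_eq
  intro t
  cases t with
  | zero =>
      rw [Nat.testBit_land]
      simp [Nat.testBit_zero, Nat.mul_mod_right]
  | succ t =>
      rw [Nat.testBit_land, Nat.testBit_succ, Nat.testBit_succ, Nat.testBit_succ,
        Nat.mul_div_cancel_left _ (by norm_num : (0:ℕ) < 2),
        Nat.mul_div_cancel_left _ (by norm_num : (0:ℕ) < 2), Nat.testBit_land]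

lemma land_two_mul_add_one (j k : ℕ) :
    (2 * j + 1) &&& k = 2 * (j &&& (k / 2)) + k % 2 := by
  apply Nat.eq_of_testBit_eq
  intro t
  have hk : k % 2 = 0 ∨ k % 2 = 1 := by omega
  cases t with
  | zero =>
      rw [Nat.testBit_land]
      rcases hk with h | h <;>
        simp [Nat.testBit_zero, Nat.add_mul_mod_self_left, h] <;> omega
  | succ t =>
      rw [Nat.testBit_land, Nat.testBit_succ, Nat.testBit_succ, Nat.testBit_succ]
      have h1 : (2 * j + 1) / 2 = j := by omega
      have h2 : (2 * (j &&& k / 2) + k % 2) / 2 = j &&& k / 2 := by omega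
      rw [h1, h2, Nat.testBit_land]

lemma sum_range_two_mul (N : ℕ) (f : ℕ → ℝ) :
    ∑ j ∈ Finset.range (2 * N), f j
      = ∑ j ∈ Finset.range N, (f (2 * j) + f (2 * j + 1)) := by
  induction N with
  | zero => simp
  | succ N ih =>
      have h : 2 * (N + 1) = (2 * N) + 1 + 1 := by ring
      rw [h, Finset.sum_range_succ, Finset.sum_range_succ, ih, Finset.sum_range_succ]
      ring

lemma ortho (n : ℕ) : ∀ k l, k < 2 ^ n → l < 2 ^ n →
    ∑ j ∈ Finset.range (2 ^ n), eps (j &&& k) * eps (j &&& l)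
      = if k = l then (2 ^ n : ℝ) else 0 := by
  induction n with
  | zero =>
      intro k l hk hl
      norm_num at hk hl
      subst hk; subst hl
      simp [eps_zero]
  | succ n ih =>
      intro k l hk hl
      have key : ∀ j : ℕ,
          eps ((2*j) &&& k) * eps ((2*j) &&& l)
            + eps ((2*j+1) &&& k) * eps ((2*j+1) &&& l)
          = (1 + (-1:ℝ)^(k%2) * (-1:ℝ)^(l%2))
              * (eps (j &&& (k/2)) * eps (j &&& (l/2))) := by
        intro j
        rw [land_two_mul, land_two_mul, land_two_mul_add_one, land_two_mul_add_one,
          eps_two_mul, eps_two_mul]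
        have hk2 : k % 2 = 0 ∨ k % 2 = 1 := by omega
        have hl2 : l % 2 = 0 ∨ l % 2 = 1 := by omega
        rcases hk2 with h|h <;> rcases hl2 with h'|h' <;> rw [h, h'] <;>
          simp [eps_two_mul, eps_two_mul_add_one] <;> ring
      have h2 : 2 ^ (n+1) = 2 * 2 ^ n := by ring
      rw [h2, sum_range_two_mul]
      simp_rw [key]
      rw [← Finset.mul_sum, ih (k/2) (l/2) (by omega) (by omega)]
      have hk2 : k % 2 = 0 ∨ k % 2 = 1 := by omega
      have hl2 : l % 2 = 0 ∨ l % 2 = 1 := by omega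
      rcases hk2 with h|h <;> rcases hl2 with h'|h' <;> rw [h, h'] <;>
        split_ifs with hq he <;>
        first
          | (exfalso; omega)
          | (push_cast; ring)
          | ring

lemma land_mod (j k m : ℕ) (hj : j < 2 ^ m) : j &&& k = j &&& (k % 2 ^ m) := by
  apply Nat.eq_of_testBit_eq
  intro t
  rw [Nat.testBit_land, Nat.testBit_land, Nat.testBit_mod_two_pow]
  by_cases ht : t < m
  · simp [ht]
  · have hjt : j.testBit t = false := by
      apply Nat.testBit_lt_two_pow
      exact lt_of_lt_of_le hj (Nat.pow_le_pow_right (by norm_num) (le_of_not_gt ht))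
    simp [hjt]

lemma gram (n m : ℕ) (hmn : m ≤ n) (k k' : ℕ) (hk : k < 2 ^ n) (hk' : k' < 2 ^ n) :
    ∑ j ∈ Finset.range (2 ^ n - 2 ^ m), eps ((j + 2 ^ m) &&& k) * eps ((j + 2 ^ m) &&& k')
      = (if k = k' then (2 ^ n : ℝ) else 0)
        - (if k % 2 ^ m = k' % 2 ^ m then (2 ^ m : ℝ) else 0) := by
  have hle : 2 ^ m ≤ 2 ^ n := Nat.pow_le_pow_right (by norm_num) hmn
  have h1 : ∑ j ∈ Finset.Ico (2 ^ m) (2 ^ n), eps (j &&& k) * eps (j &&& k')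
      = ∑ j ∈ Finset.range (2 ^ n - 2 ^ m),
          eps ((j + 2 ^ m) &&& k) * eps ((j + 2 ^ m) &&& k') := by
    rw [Finset.sum_Ico_eq_sum_range]
    exact Finset.sum_congr rfl fun j _ => by rw [Nat.add_comm]
  have hsplit : ∑ j ∈ Finset.range (2 ^ m), eps (j &&& k) * eps (j &&& k')
      + ∑ j ∈ Finset.range (2 ^ n - 2 ^ m), eps ((j + 2 ^ m) &&& k) * eps ((j + 2 ^ m) &&& k')
      = ∑ j ∈ Finset.range (2 ^ n), eps (j &&& k) * eps (j &&& k') := by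
    rw [← h1, Finset.range_eq_Ico,
      Finset.sum_Ico_consecutive _ (Nat.zero_le (2 ^ m)) hle, Finset.range_eq_Ico]
  have htop : ∑ j ∈ Finset.range (2 ^ m), eps (j &&& k) * eps (j &&& k')
      = if k % 2 ^ m = k' % 2 ^ m then (2 ^ m : ℝ) else 0 := by
    have e : ∀ j ∈ Finset.range (2 ^ m), eps (j &&& k) * eps (j &&& k')
        = eps (j &&& (k % 2 ^ m)) * eps (j &&& (k' % 2 ^ m)) := by
      intro j hj
      rw [Finset.mem_range] at hj
      rw [land_mod j k m hj, land_mod j k' m hj]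
    rw [Finset.sum_congr rfl e]
    exact ortho m _ _ (Nat.mod_lt _ (Nat.two_pow_pos m))
      (Nat.mod_lt _ (Nat.two_pow_pos m))
  have hfull := ortho n k k' hk hk'
  linarith [hsplit, htop, hfull]

lemma span_smul_range {E : Type*} [AddCommGroup E] [Module ℝ E] (c : ℝ) (hc : c ≠ 0)
    {ι : Type*} (f : ι → E) :
    Submodule.span ℝ (Set.range fun r => c • f r) = Submodule.span ℝ (Set.range f) := by
  apply le_antisymm <;> rw [Submodule.span_le] <;> rintro _ ⟨r, rfl⟩
  · exact Submodule.smul_mem _ _ (Submodule.subset_span ⟨r, rfl⟩)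
  · have h : f r = c⁻¹ • (c • f r) := by rw [smul_smul, inv_mul_cancel₀ hc, one_smul]
    rw [h]
    exact Submodule.smul_mem _ _ (Submodule.subset_span ⟨r, rfl⟩)

end aux

/-- The Walsh–Hadamard construction yields an equi-distance tight fusion frame
for `ℝ^{2ⁿ−2^m}` consisting of `2^{n−m}` subspaces of dimension `2^m`:
`∑ i, P_i = (2ⁿ/(2ⁿ − 2^m)) · Id`, each `dim W_i = 2^m`, and all pairwise
chordal distances `√(2^m − trace(P_{i₁} P_{i₂}))` (`i₁ ≠ i₂`) are equal. -/
theorem stmt_16 (n m : ℕ) (hmn : m < n)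
    (W : Fin (2 ^ (n - m)) → Submodule ℝ (EuclideanSpace ℝ (Fin (2 ^ n - 2 ^ m))))
    (hW : ∀ i : Fin (2 ^ (n - m)),
      W i = Submodule.span ℝ (Set.range (fun r : Fin (2 ^ m) =>
        (WithLp.toLp 2 (fun j : Fin (2 ^ n - 2 ^ m) =>
          ((-1 : ℝ) ^ bitOverlap (j.val + 2 ^ m) (i.val * 2 ^ m + r.val))) :
            EuclideanSpace ℝ (Fin (2 ^ n - 2 ^ m)))))) :
    (∀ x : EuclideanSpace ℝ (Fin (2 ^ n - 2 ^ m)),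
        (∑ i : Fin (2 ^ (n - m)),
            ((W i).orthogonalProjectionOnto x : EuclideanSpace ℝ (Fin (2 ^ n - 2 ^ m)))) =
          ((2 ^ n : ℝ) / ((2 ^ n : ℝ) - 2 ^ m)) • x) ∧
      (∀ i : Fin (2 ^ (n - m)), Module.finrank ℝ ↥(W i) = 2 ^ m) ∧
      (∃ d : ℝ, ∀ i₁ i₂ : Fin (2 ^ (n - m)), i₁ ≠ i₂ →
        Real.sqrt ((2 ^ m : ℝ) -
            LinearMap.trace ℝ (EuclideanSpace ℝ (Fin (2 ^ n - 2 ^ m)))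
              ((((W i₁).subtypeL.comp ((W i₁).orthogonalProjectionOnto)).comp
                ((W i₂).subtypeL.comp ((W i₂).orthogonalProjectionOnto))).toLinearMap)) = d) := by
  classical
  have hmn' : m ≤ n := hmn.le
  have hltpow : (2:ℕ) ^ m < 2 ^ n := Nat.pow_lt_pow_right (by norm_num) hmn
  have hpow : 2 ^ (n - m) * 2 ^ m = 2 ^ n := by
    rw [← pow_add]; congr 1; omega
  -- the column vectors
  set v : ℕ → (EuclideanSpace ℝ (Fin (2 ^ n - 2 ^ m))) := fun k => WithLp.toLp 2 (fun j : Fin (2 ^ n - 2 ^ m) => eps ((j.val + 2 ^ m) &&& k) : Fin (2 ^ n - 2 ^ m) → ℝ)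
    with hvdef
  have hvapp : ∀ k (j : Fin (2 ^ n - 2 ^ m)), v k j = eps ((j.val + 2 ^ m) &&& k) := fun k j => rfl
  -- hW in terms of v
  have hWv : ∀ i : Fin (2 ^ (n - m)),
      W i = Submodule.span ℝ (Set.range fun r : Fin (2 ^ m) =>
        v (i.val * 2 ^ m + r.val)) := by
    intro i
    rw [hW i]
    rfl
  -- bound on column indices
  have hkb : ∀ (i r : ℕ), i < 2 ^ (n - m) → r < 2 ^ m → i * 2 ^ m + r < 2 ^ n := by
    intro i r hi hr
    have h1 : (i + 1) * 2 ^ m ≤ 2 ^ (n - m) * 2 ^ m :=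
      Nat.mul_le_mul_right _ (Nat.succ_le_of_lt hi)
    have h2 : (i + 1) * 2 ^ m = i * 2 ^ m + 2 ^ m := by ring
    omega
  have hmod : ∀ (i r : ℕ), r < 2 ^ m → (i * 2 ^ m + r) % 2 ^ m = r := by
    intro i r hr
    have he : i * 2 ^ m + r = 2 ^ m * i + r := by ring
    rw [he, Nat.mul_add_mod, Nat.mod_eq_of_lt hr]
  -- real inner product on (EuclideanSpace ℝ (Fin (2 ^ n - 2 ^ m)))
  have hinner : ∀ x y : (EuclideanSpace ℝ (Fin (2 ^ n - 2 ^ m))), ⟪x, y⟫_ℝ = ∑ j : Fin (2 ^ n - 2 ^ m), x j * y j := by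
    intro x y
    simp [PiLp.inner_apply, mul_comm]
  -- Gram matrix
  have hgram : ∀ k k', k < 2 ^ n → k' < 2 ^ n →
      ⟪v k, v k'⟫_ℝ = (if k = k' then (2 ^ n : ℝ) else 0)
        - (if k % 2 ^ m = k' % 2 ^ m then (2 ^ m : ℝ) else 0) := by
    intro k k' hk hk'
    rw [hinner, ← gram n m hmn' k k' hk hk', Finset.sum_range
      (fun j => eps ((j + 2 ^ m) &&& k) * eps ((j + 2 ^ m) &&& k'))]
  -- normalization constant
  set c2 : ℝ := (2 ^ n : ℝ) - 2 ^ m with hc2def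
  have hc2pos : 0 < c2 := by
    have : (2:ℝ) ^ m < 2 ^ n := by
      exact_mod_cast hltpow
    simp [hc2def]; linarith
  set c : ℝ := (Real.sqrt c2)⁻¹ with hcdef
  have hsq : c * c = c2⁻¹ := by
    rw [hcdef, ← mul_inv]
    rw [Real.mul_self_sqrt hc2pos.le]
  have hcne : c ≠ 0 := by
    rw [hcdef]
    exact inv_ne_zero (Real.sqrt_ne_zero'.2 hc2pos)
  -- self inner product
  have hvnorm : ∀ k, k < 2 ^ n → ⟪v k, v k⟫_ℝ = c2 := by
    intro k hk
    rw [hgram k k hk hk]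
    simp [hc2def]
  -- the index of the r-th vector of the i-th space
  set ki : Fin (2 ^ (n - m)) → Fin (2 ^ m) → ℕ :=
    fun i r => i.val * 2 ^ m + r.val with hkidef
  have hkilt : ∀ i r, ki i r < 2 ^ n := fun i r => hkb _ _ i.isLt r.isLt
  have hkimod : ∀ i r, (ki i r) % 2 ^ m = r.val := fun i r => hmod _ _ r.isLt
  have hgramki : ∀ i₁ i₂ r₁ r₂, ⟪v (ki i₁ r₁), v (ki i₂ r₂)⟫_ℝ
      = (if ki i₁ r₁ = ki i₂ r₂ then (2 ^ n : ℝ) else 0)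
        - (if r₁.val = r₂.val then (2 ^ m : ℝ) else 0) := by
    intro i₁ i₂ r₁ r₂
    rw [hgram _ _ (hkilt i₁ r₁) (hkilt i₂ r₂), hkimod, hkimod]
  have hkinj : ∀ i₁ i₂ r₁ r₂, ki i₁ r₁ = ki i₂ r₂ ↔ (i₁ = i₂ ∧ r₁ = r₂) := by
    intro i₁ i₂ r₁ r₂
    constructor
    · intro h
      have h1 := hkimod i₁ r₁
      have h2 := hkimod i₂ r₂
      rw [h] at h1
      have hr : r₁.val = r₂.val := by omega
      have hi : i₁.val * 2 ^ m = i₂.val * 2 ^ m := by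
        simp only [hkidef] at h; omega
      have hpos : 0 < 2 ^ m := Nat.two_pow_pos m
      have hi' : i₁.val = i₂.val := Nat.eq_of_mul_eq_mul_right hpos hi
      exact ⟨Fin.ext hi', Fin.ext hr⟩
    · rintro ⟨rfl, rfl⟩; rfl
  -- membership
  have hmem : ∀ i r, c • v (ki i r) ∈ W i := by
    intro i r
    rw [hWv i]
    exact Submodule.smul_mem _ _ (Submodule.subset_span ⟨r, rfl⟩)
  -- the orthonormal vectors
  set u : ∀ i : Fin (2 ^ (n - m)), Fin (2 ^ m) → (W i) :=
    fun i r => ⟨c • v (ki i r), hmem i r⟩ with hudef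
  have huon : ∀ i, Orthonormal ℝ (u i) := by
    intro i
    rw [orthonormal_iff_ite]
    intro r r'
    have : ⟪u i r, u i r'⟫_ℝ = ⟪(u i r : (EuclideanSpace ℝ (Fin (2 ^ n - 2 ^ m)))), (u i r' : (EuclideanSpace ℝ (Fin (2 ^ n - 2 ^ m))))⟫_ℝ := rfl
    rw [this]
    simp only [hudef]
    rw [real_inner_smul_left, real_inner_smul_right, hgramki i i r r']
    simp only [hkinj, eq_self_iff_true, true_and, Fin.val_inj]
    by_cases h : r = r'
    · rw [if_pos h, if_pos h, if_pos h, ← hc2def, ← mul_assoc, hsq,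
        inv_mul_cancel₀ hc2pos.ne']
    · rw [if_neg h, if_neg h, if_neg h]
      ring
  -- spanning
  have huspan : ∀ i, ⊤ ≤ Submodule.span ℝ (Set.range (u i)) := by
    intro i
    intro x _
    have hmap : Submodule.map (W i).subtype (Submodule.span ℝ (Set.range (u i))) = W i := by
      rw [Submodule.map_span]
      have himg : (W i).subtype '' Set.range (u i)
          = Set.range (fun r : Fin (2 ^ m) => c • v (ki i r)) := by
        rw [← Set.range_comp]
        rfl
      rw [himg, span_smul_range c hcne, hWv i]
    have hx : x.val ∈ Submodule.map (W i).subtype (Submodule.span ℝ (Set.range (u i))) := by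
      rw [hmap]; exact x.2
    obtain ⟨y, hy, hxy⟩ := hx
    have hyx : y = x := Subtype.ext hxy
    rwa [hyx] at hy
  -- orthonormal bases
  set b : ∀ i, OrthonormalBasis (Fin (2 ^ m)) ℝ (W i) :=
    fun i => OrthonormalBasis.mk (huon i) (huspan i) with hbdef
  have hbapp : ∀ i r, b i r = u i r := by
    intro i r
    rw [hbdef]
    simp [OrthonormalBasis.coe_mk]
  -- projection formula
  have hproj : ∀ i (x : (EuclideanSpace ℝ (Fin (2 ^ n - 2 ^ m)))), ((W i).orthogonalProjectionOnto x : (EuclideanSpace ℝ (Fin (2 ^ n - 2 ^ m))))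
      = ∑ r : Fin (2 ^ m), (c2⁻¹ * ⟪v (ki i r), x⟫_ℝ) • v (ki i r) := by
    intro i x
    rw [OrthonormalBasis.orthogonalProjectionOnto_apply_eq_sum (b i)]
    rw [Submodule.coe_sum]
    apply Finset.sum_congr rfl
    intro r _
    rw [hbapp]
    have h1 : ((⟪(u i r : (EuclideanSpace ℝ (Fin (2 ^ n - 2 ^ m)))), x⟫_ℝ • u i r : W i) : (EuclideanSpace ℝ (Fin (2 ^ n - 2 ^ m)))) = ⟪(u i r : (EuclideanSpace ℝ (Fin (2 ^ n - 2 ^ m)))), x⟫_ℝ • (u i r : (EuclideanSpace ℝ (Fin (2 ^ n - 2 ^ m)))) := rfl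
    rw [h1]
    have h2 : (u i r : (EuclideanSpace ℝ (Fin (2 ^ n - 2 ^ m)))) = c • v (ki i r) := rfl
    rw [h2, real_inner_smul_left, smul_smul, mul_right_comm, hsq]
  -- cross-row orthogonality
  have hjb : ∀ j : Fin (2 ^ n - 2 ^ m), j.val + 2 ^ m < 2 ^ n := by
    intro j
    have := j.isLt
    omega
  have hcross : ∀ j j' : Fin (2 ^ n - 2 ^ m),
      ∑ k ∈ Finset.range (2 ^ n), v k j * v k j' = if j = j' then (2 ^ n : ℝ) else 0 := by
    intro j j'
    have h1 : ∀ k, v k j * v k j'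
        = eps (k &&& (j.val + 2 ^ m)) * eps (k &&& (j'.val + 2 ^ m)) := by
      intro k
      rw [hvapp, hvapp, Nat.land_comm _ k, Nat.land_comm _ k]
    rw [Finset.sum_congr rfl fun k _ => h1 k, ortho n _ _ (hjb j) (hjb j')]
    have h2 : (j.val + 2 ^ m = j'.val + 2 ^ m) ↔ j = j' := by
      rw [Nat.add_right_cancel_iff, Fin.val_inj]
    simp only [h2]
  -- reindexing double sums over (i, r) as sums over k < 2^n
  have hreindex : ∀ f : ℕ → (EuclideanSpace ℝ (Fin (2 ^ n - 2 ^ m))),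
      ∑ i : Fin (2 ^ (n - m)), ∑ r : Fin (2 ^ m), f (ki i r)
        = ∑ k ∈ Finset.range (2 ^ n), f k := by
    intro f
    have h1 : ∑ i : Fin (2 ^ (n - m)), ∑ r : Fin (2 ^ m), f (ki i r)
        = ∑ i ∈ Finset.range (2 ^ (n - m)), ∑ r ∈ Finset.range (2 ^ m),
            f (i * 2 ^ m + r) := by
      rw [Finset.sum_range (fun i => ∑ r ∈ Finset.range (2 ^ m), f (i * 2 ^ m + r))]
      apply Finset.sum_congr rfl
      intro i _
      rw [Finset.sum_range (fun r => f (i.val * 2 ^ m + r))]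
    rw [h1, ← Finset.sum_product']
    apply Finset.sum_nbij' (i := fun p : ℕ × ℕ => p.1 * 2 ^ m + p.2)
      (j := fun k => (k / 2 ^ m, k % 2 ^ m))
    · rintro ⟨i, r⟩ hp
      rw [Finset.mem_product, Finset.mem_range, Finset.mem_range] at hp
      exact Finset.mem_range.2 (hkb i r hp.1 hp.2)
    · intro k hk
      rw [Finset.mem_range] at hk
      rw [Finset.mem_product, Finset.mem_range, Finset.mem_range]
      constructor
      · rw [Nat.div_lt_iff_lt_mul (Nat.two_pow_pos m)]
        omega
      · exact Nat.mod_lt _ (Nat.two_pow_pos m)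
    · rintro ⟨i, r⟩ hp
      rw [Finset.mem_product, Finset.mem_range, Finset.mem_range] at hp
      have he : i * 2 ^ m + r = 2 ^ m * i + r := by ring
      have hd : (i * 2 ^ m + r) / 2 ^ m = i := by
        rw [he, Nat.mul_add_div (Nat.two_pow_pos m),
          Nat.div_eq_of_lt hp.2, Nat.add_zero]
      have hm2 : (i * 2 ^ m + r) % 2 ^ m = r := hmod i r hp.2
      simp only [hd, hm2]
    · intro k hk
      simp only
      rw [Nat.mul_comm]
      exact Nat.div_add_mod k (2 ^ m)
    · intro p _
      rfl
  -- the key row identity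
  have hrow : ∀ x : (EuclideanSpace ℝ (Fin (2 ^ n - 2 ^ m))), ∑ k ∈ Finset.range (2 ^ n), ⟪v k, x⟫_ℝ • v k = ((2 ^ n : ℝ)) • x := by
    intro x
    ext j
    have happ : (∑ k ∈ Finset.range (2 ^ n), ⟪v k, x⟫_ℝ • v k) j
        = ∑ k ∈ Finset.range (2 ^ n), ⟪v k, x⟫_ℝ * v k j := by
      rw [WithLp.ofLp_sum, Finset.sum_apply]
      rfl
    rw [happ]
    have e1 : ∀ k, ⟪v k, x⟫_ℝ * v k j = ∑ j' : Fin (2 ^ n - 2 ^ m), (v k j' * v k j) * x j' := by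
      intro k
      rw [hinner, Finset.sum_mul]
      exact Finset.sum_congr rfl fun j' _ => by ring
    rw [Finset.sum_congr rfl fun k _ => e1 k, Finset.sum_comm]
    have e2 : ∀ j' : Fin (2 ^ n - 2 ^ m), ∑ k ∈ Finset.range (2 ^ n), (v k j' * v k j) * x j'
        = (if j' = j then (2 ^ n : ℝ) else 0) * x j' := by
      intro j'
      rw [← Finset.sum_mul, hcross j' j]
    rw [Finset.sum_congr rfl fun j' _ => e2 j']
    have e3 : ((2 ^ n : ℝ) • x) j = (2 ^ n : ℝ) * x j := rfl
    rw [e3]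
    simp [Finset.sum_ite_eq']
  -- Part 1 : tightness
  have part1 : ∀ x : (EuclideanSpace ℝ (Fin (2 ^ n - 2 ^ m))),
      (∑ i : Fin (2 ^ (n - m)), ((W i).orthogonalProjectionOnto x : (EuclideanSpace ℝ (Fin (2 ^ n - 2 ^ m)))))
        = ((2 ^ n : ℝ) / c2) • x := by
    intro x
    have h1 : ∀ i : Fin (2 ^ (n - m)), ((W i).orthogonalProjectionOnto x : (EuclideanSpace ℝ (Fin (2 ^ n - 2 ^ m))))
        = ∑ r : Fin (2 ^ m), (c2⁻¹ * ⟪v (ki i r), x⟫_ℝ) • v (ki i r) := fun i => hproj i x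
    rw [Finset.sum_congr rfl fun i _ => h1 i,
      hreindex (fun k => (c2⁻¹ * ⟪v k, x⟫_ℝ) • v k)]
    have h2 : ∀ k, (c2⁻¹ * ⟪v k, x⟫_ℝ) • v k = c2⁻¹ • (⟪v k, x⟫_ℝ • v k) := by
      intro k
      rw [smul_smul]
    rw [Finset.sum_congr rfl fun k _ => h2 k, ← Finset.smul_sum, hrow, smul_smul]
    congr 1
    rw [div_eq_inv_mul]
  -- Part 2 : dimensions
  have part2 : ∀ i : Fin (2 ^ (n - m)), Module.finrank ℝ ↥(W i) = 2 ^ m := by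
    intro i
    have := Module.finrank_eq_card_basis (b i).toBasis
    simpa using this
  -- trace helper
  have htraceaux : ∀ (w w' : Fin (2 ^ m) → (EuclideanSpace ℝ (Fin (2 ^ n - 2 ^ m)))) (T : (EuclideanSpace ℝ (Fin (2 ^ n - 2 ^ m))) →ₗ[ℝ] (EuclideanSpace ℝ (Fin (2 ^ n - 2 ^ m))))
      (hT : ∀ x, T x = ∑ r : Fin (2 ^ m), ⟪w r, x⟫_ℝ • w' r),
      LinearMap.trace ℝ (EuclideanSpace ℝ (Fin (2 ^ n - 2 ^ m))) T = ∑ r : Fin (2 ^ m), ⟪w r, w' r⟫_ℝ := by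
    intro w w' T hT
    classical
    rw [LinearMap.trace_eq_matrix_trace ℝ (PiLp.basisFun 2 ℝ (Fin (2 ^ n - 2 ^ m))) T, Matrix.trace]
    have hdiag : ∀ j : Fin (2 ^ n - 2 ^ m),
        (LinearMap.toMatrix (PiLp.basisFun 2 ℝ (Fin (2 ^ n - 2 ^ m))) (PiLp.basisFun 2 ℝ (Fin (2 ^ n - 2 ^ m))) T).diag j
          = ∑ r : Fin (2 ^ m), w r j * w' r j := by
      intro j
      rw [Matrix.diag_apply, LinearMap.toMatrix_apply, PiLp.basisFun_repr, hT]
      have h1 : (∑ r : Fin (2 ^ m), ⟪w r, PiLp.basisFun 2 ℝ (Fin (2 ^ n - 2 ^ m)) j⟫_ℝ • w' r) j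
          = ∑ r : Fin (2 ^ m), ⟪w r, PiLp.basisFun 2 ℝ (Fin (2 ^ n - 2 ^ m)) j⟫_ℝ * w' r j := by
        rw [WithLp.ofLp_sum, Finset.sum_apply]
        rfl
      rw [h1]
      apply Finset.sum_congr rfl
      intro r _
      congr 1
      rw [hinner]
      have h2 : ∀ j' : Fin (2 ^ n - 2 ^ m), (PiLp.basisFun 2 ℝ (Fin (2 ^ n - 2 ^ m)) j) j'
          = if j' = j then (1:ℝ) else 0 := by
        intro j'
        rw [PiLp.basisFun_apply]
        simp [Pi.single_apply]
      rw [Finset.sum_congr rfl fun j' _ => by rw [h2 j']]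
      simp [Finset.sum_ite_eq', mul_ite]
    rw [Finset.sum_congr rfl fun j _ => hdiag j, Finset.sum_comm]
    apply Finset.sum_congr rfl
    intro r _
    rw [hinner]
  -- Part 3 : equal traces
  have part3 : ∀ i₁ i₂ : Fin (2 ^ (n - m)), i₁ ≠ i₂ →
      LinearMap.trace ℝ (EuclideanSpace ℝ (Fin (2 ^ n - 2 ^ m)))
        ((((W i₁).subtypeL.comp ((W i₁).orthogonalProjectionOnto)).comp
          ((W i₂).subtypeL.comp ((W i₂).orthogonalProjectionOnto))).toLinearMap)
      = (2 ^ m : ℝ) ^ 3 / (c2 * c2) := by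
    intro i₁ i₂ hne
    set T := ((((W i₁).subtypeL.comp ((W i₁).orthogonalProjectionOnto)).comp
      ((W i₂).subtypeL.comp ((W i₂).orthogonalProjectionOnto))).toLinearMap) with hTdef
    have hTapp : ∀ x : (EuclideanSpace ℝ (Fin (2 ^ n - 2 ^ m))), T x = ((W i₁).orthogonalProjectionOnto
        (((W i₂).orthogonalProjectionOnto x : (EuclideanSpace ℝ (Fin (2 ^ n - 2 ^ m))))) : (EuclideanSpace ℝ (Fin (2 ^ n - 2 ^ m)))) := by
      intro x
      rfl
    have hcr : ∀ r₁ r₂ : Fin (2 ^ m), ⟪v (ki i₁ r₁), v (ki i₂ r₂)⟫_ℝ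
        = if r₁ = r₂ then -(2 ^ m : ℝ) else 0 := by
      intro r₁ r₂
      rw [hgramki]
      have hne2 : ¬ (ki i₁ r₁ = ki i₂ r₂) := by
        rw [hkinj]
        tauto
      rw [if_neg hne2]
      by_cases h : r₁ = r₂
      · subst h
        simp
      · rw [if_neg (fun hh : r₁.val = r₂.val => h (Fin.ext hh)), if_neg h]
        ring
    have hTform : ∀ x : (EuclideanSpace ℝ (Fin (2 ^ n - 2 ^ m))), T x = ∑ r : Fin (2 ^ m),
        ⟪(c2⁻¹ * c2⁻¹ * -(2 ^ m : ℝ)) • v (ki i₂ r), x⟫_ℝ • v (ki i₁ r) := by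
      intro x
      rw [hTapp, hproj i₁]
      apply Finset.sum_congr rfl
      intro r _
      have h1 : ⟪v (ki i₁ r), ((W i₂).orthogonalProjectionOnto x : (EuclideanSpace ℝ (Fin (2 ^ n - 2 ^ m))))⟫_ℝ
          = c2⁻¹ * -(2 ^ m : ℝ) * ⟪v (ki i₂ r), x⟫_ℝ := by
        rw [hproj i₂, inner_sum]
        have h2 : ∀ r' : Fin (2 ^ m),
            ⟪v (ki i₁ r), (c2⁻¹ * ⟪v (ki i₂ r'), x⟫_ℝ) • v (ki i₂ r')⟫_ℝ
            = (if r = r' then -(2 ^ m : ℝ) else 0) * (c2⁻¹ * ⟪v (ki i₂ r'), x⟫_ℝ) := by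
          intro r'
          rw [real_inner_smul_right, hcr r r']
          ring
        rw [Finset.sum_congr rfl fun r' _ => h2 r']
        simp [Finset.sum_ite_eq, ite_mul]
        ring
      rw [h1, real_inner_smul_left]
      congr 1
      ring
    rw [htraceaux _ _ T hTform]
    have hterm : ∀ r : Fin (2 ^ m),
        ⟪(c2⁻¹ * c2⁻¹ * -(2 ^ m : ℝ)) • v (ki i₂ r), v (ki i₁ r)⟫_ℝ
        = c2⁻¹ * c2⁻¹ * -(2 ^ m : ℝ) * -(2 ^ m : ℝ) := by
      intro r
      rw [real_inner_smul_left]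
      have : ⟪v (ki i₂ r), v (ki i₁ r)⟫_ℝ = -(2 ^ m : ℝ) := by
        rw [real_inner_comm, hcr r r, if_pos rfl]
      rw [this]
    rw [Finset.sum_congr rfl fun r _ => hterm r, Finset.sum_const]
    simp only [Finset.card_univ, Fintype.card_fin, nsmul_eq_mul]
    push_cast
    field_simp
  refine ⟨part1, part2, ?_⟩
  refine ⟨Real.sqrt ((2 ^ m : ℝ) - (2 ^ m : ℝ) ^ 3 / (c2 * c2)), ?_⟩
  intro i₁ i₂ hne
  rw [part3 i₁ i₂ hne]
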